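/- Let n ≥ 1, let p be an odd prime, and let u be a normalized unit of order 2p in the integral group ring ℤS_n. Then ε_{A_n}(u) = ε_{A_n}(u^p), and this common value is 0 or 1. -/

import Mathlib

/-- The augmentation of an element of the integral group ring `ℤG`:
the sum of all of its coefficients. -/
def aug {G : Type*} [Group G] [Fintype G] (u : MonoidAlgebra ℤ G) : ℤ :=
  ∑ g : G, u.coeff g

/-- The generalized partial augmentation of u ∈ ℤS_n with respect to the
alternating group A_n: the sum of the coefficients of u over all even permutations. -/
def augAlt (n : ℕ) (u : MonoidAlgebra ℤ (Equiv.Perm (Fin n))) : ℤ :=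
  ∑ g : Equiv.Perm (Fin n), if Equiv.Perm.sign g = 1 then u.coeff g else 0

noncomputable def augHom (n : ℕ) : MonoidAlgebra ℤ (Equiv.Perm (Fin n)) →ₐ[ℤ] ℤ :=
  MonoidAlgebra.lift ℤ ℤ _ 1

noncomputable def sgnHom (n : ℕ) : MonoidAlgebra ℤ (Equiv.Perm (Fin n)) →ₐ[ℤ] ℤ :=
  MonoidAlgebra.lift ℤ ℤ _ ((Units.coeHom ℤ).comp Equiv.Perm.sign)

lemma augHom_eq (n : ℕ) (v : MonoidAlgebra ℤ (Equiv.Perm (Fin n))) :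
    augHom n v = aug v := by
  simp only [augHom, MonoidAlgebra.lift_apply, aug]
  rw [Finsupp.sum_fintype] <;> simp

lemma key (n : ℕ) (v : MonoidAlgebra ℤ (Equiv.Perm (Fin n))) :
    aug v + sgnHom n v = 2 * augAlt n v := by
  rw [← augHom_eq]
  simp only [augHom, sgnHom, MonoidAlgebra.lift_apply]
  rw [Finsupp.sum_fintype, Finsupp.sum_fintype]
  · rw [augAlt, ← Finset.sum_add_distrib, Finset.mul_sum]
    apply Finset.sum_congr rfl
    intro g _
    rcases Int.units_eq_one_or (Equiv.Perm.sign g) with h | h <;> simp [h] <;> ring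
  · simp
  · simp

/-- For an odd prime p and a normalized unit u of order 2p in ℤS_n, we have
ε_(A_n)(u) = ε_(A_n)(u^p) and this common value is 0 or 1. -/
theorem stmt_7 (n p : ℕ) (hn : 1 ≤ n) (hp : p.Prime) (hodd : Odd p)
    (u : (MonoidAlgebra ℤ (Equiv.Perm (Fin n)))ˣ)
    (hu1 : aug (u : MonoidAlgebra ℤ (Equiv.Perm (Fin n))) = 1)
    (huo : orderOf u = 2 * p) :
    augAlt n (u : MonoidAlgebra ℤ (Equiv.Perm (Fin n))) =
      augAlt n ((u ^ p : (MonoidAlgebra ℤ (Equiv.Perm (Fin n)))ˣ) :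
        MonoidAlgebra ℤ (Equiv.Perm (Fin n))) ∧
    (augAlt n (u : MonoidAlgebra ℤ (Equiv.Perm (Fin n))) = 0 ∨
     augAlt n (u : MonoidAlgebra ℤ (Equiv.Perm (Fin n))) = 1) := by
  set v : MonoidAlgebra ℤ (Equiv.Perm (Fin n)) := (u : MonoidAlgebra ℤ (Equiv.Perm (Fin n))) with hv
  have h1 : aug v + sgnHom n v = 2 * augAlt n v := key n v
  have hvp : ((u ^ p : (MonoidAlgebra ℤ (Equiv.Perm (Fin n)))ˣ) :
      MonoidAlgebra ℤ (Equiv.Perm (Fin n))) = v ^ p := by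
    rw [Units.val_pow_eq_pow_val]
  have h2 : aug (v ^ p) + sgnHom n (v ^ p) = 2 * augAlt n (v ^ p) := key n (v ^ p)
  have haugp : aug (v ^ p) = 1 := by
    rw [← augHom_eq, map_pow, augHom_eq, hu1, one_pow]
  have hunit : IsUnit (sgnHom n v) := u.isUnit.map (sgnHom n)
  have hsgnp : sgnHom n (v ^ p) = sgnHom n v := by
    rw [map_pow]
    rcases Int.isUnit_iff.mp hunit with h | h <;> rw [h]
    · rw [one_pow]
    · rw [hodd.neg_one_pow]
  have heq : augAlt n v = augAlt n (v ^ p) := by omega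
  refine ⟨by rw [hvp, ← heq], ?_⟩
  rcases Int.isUnit_iff.mp hunit with h | h <;> rw [h, hu1] at h1 <;> omega
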